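/- With N ≥ 1, α, β > −1, 0 < k < β+1, set ω_m = ((β−k+1)_{m−1}/(m−1)!)·((k)_{N−m}/(N−m)!) for 1 ≤ m ≤ N. Then Σ_{m=1}^{N} ω_m · ∫₀¹ y^{α+N−m} (1−y)^β dy = (α+β−k+2)_{N−1} · Γ(α+1) · Γ(β+N) / ((N−1)! · Γ(α+β+N+1)). Equivalently, Σ_{m=1}^{N} ω_m · B(α+N−m+1, β+1) equals the stated right-hand side, where B is the Beta function; this is the normalizing constant identity showing that the invariant distribution of the process has components ψ_j(y) = y^{α+N−j}(1−y)^β · C(N−1, j−1) · (Γ(α+β+N+1)/(Γ(α+1)Γ(β+N+1))) · (β+N)(k)_{N−j}(β−k+1)_{j−1}/(α+β−k+2)_{N−1}. -/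

import Mathlib

open Polynomial Finset

noncomputable def pch (x : ℝ) (n : ℕ) : ℝ := (ascPochhammer ℝ n).eval x

lemma pch_zero (x : ℝ) : pch x 0 = 1 := by simp [pch]

lemma pch_succ (x : ℝ) (n : ℕ) : pch x (n+1) = pch x n * (x + n) := by
  simpa [pch] using ascPochhammer_succ_eval n x

lemma pch_one (x : ℝ) : pch x 1 = x := by
  rw [show (1:ℕ) = 0+1 from rfl, pch_succ, pch_zero]; simp

lemma pch_pos {x : ℝ} (hx : 0 < x) (n : ℕ) : 0 < pch x n := ascPochhammer_pos n x hx

lemma pch_succ_left (x : ℝ) (n : ℕ) : pch x (n+1) = x * pch (x+1) n := by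
  have := congrArg (Polynomial.eval x) (ascPochhammer_succ_left ℝ n)
  simpa [pch, Polynomial.eval_comp] using this

lemma pch_add (x : ℝ) (m n : ℕ) : pch x (m+n) = pch x m * pch (x + m) n := by
  have := congrArg (Polynomial.eval x) (ascPochhammer_mul ℝ m n)
  simp only [Polynomial.eval_mul, Polynomial.eval_comp, Polynomial.eval_add, Polynomial.eval_X,
    Polynomial.eval_natCast] at this
  simpa [pch] using this.symm

lemma Gamma_shift (x : ℝ) (hx : 0 < x) (n : ℕ) :
    Real.Gamma (x + n) = pch x n * Real.Gamma x := by
  induction n with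
  | zero => simp [pch_zero]
  | succ n ih =>
    have h1 : x + ((n+1 : ℕ):ℝ) = (x + n) + 1 := by push_cast; ring
    have h2 : (0:ℝ) < x + n := by positivity
    rw [h1, Real.Gamma_add_one h2.ne', ih, pch_succ]; ring

/-- Pfaff–Saalschütz identity in polynomial (Pochhammer) form. -/
lemma PS (n : ℕ) (a b c : ℝ) :
    ∑ j ∈ range (n+1), ((n.choose j : ℝ) * pch a j * pch b j *
        pch (c - a - b) (n - j) * pch (c + j) (n - j))
      = pch (c - a) n * pch (c - b) n := by
  induction n with
  | zero => simp [pch_zero]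
  | succ n ih =>
    set K : ℕ → ℝ := fun j => (n.choose j : ℝ) * pch a (j+1) * pch b (j+1) *
        pch (c - a - b) (n - j) * pch (c + j) (n - j) with hK
    set g : ℕ → ℝ := fun j => if j = 0 then 0 else K (j-1) with hg
    have key : ∀ j ∈ range (n+2),
        (((n+1).choose j : ℝ) * pch a j * pch b j *
            pch (c - a - b) (n+1-j) * pch (c + j) (n+1-j))
        = (c - a + n) * (c - b + n) *
            ((n.choose j : ℝ) * pch a j * pch b j *
              pch (c - a - b) (n-j) * pch (c + j) (n-j))
          + (g j - g (j+1)) := by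
      intro j hj
      rw [mem_range] at hj
      cases j with
      | zero =>
        have hg0 : g 0 = 0 := by simp [hg]
        have hg1 : g 1 = K 0 := by simp [hg]
        simp only [hg0, hg1, hK]
        simp only [Nat.choose_zero_right, Nat.cast_one, pch_zero, Nat.sub_zero, Nat.cast_zero,
          add_zero]
        rw [pch_succ (c-a-b) n, pch_succ c n, pch_one, pch_one]
        ring
      | succ i =>
        have hi : i ≤ n := by omega
        have hgi1 : g (i+1) = K i := by simp [hg]
        have hgi2 : g (i+2) = K (i+1) := by simp [hg]
        simp only [hgi1, hgi2, hK]
        rcases eq_or_lt_of_le hi with rfl | hilt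
        · -- i = n
          simp only [Nat.choose_self, Nat.choose_succ_self, Nat.cast_one, Nat.cast_zero,
            Nat.sub_self, Nat.add_sub_cancel_left, pch_zero, Nat.succ_sub_succ]
          have h2 : i - (i+1) = 0 := by omega
          rw [h2]
          ring
        · -- i < n
          obtain ⟨d, hd⟩ : ∃ d, n = i + 1 + d := ⟨n - (i+1), by omega⟩
          subst hd
          have e1 : i + 1 + d - (i+1) = d := by omega
          have e2 : i + 1 + d + 1 - (i+1) = d + 1 := by omega
          have e3 : i + 1 + d - i = d + 1 := by omega
          simp only [e1, e2, e3]
          rw [Nat.choose_succ_succ' (i+1+d) i]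
          have hrel : (((i+1+d).choose (i+1) : ℝ)) * ((i:ℝ)+1)
              = ((i+1+d).choose i : ℝ) * ((d:ℝ)+1) := by
            have := Nat.choose_succ_right_eq (i+1+d) i
            have h4 : i + 1 + d - i = d + 1 := by omega
            rw [h4] at this
            exact_mod_cast congrArg (fun t : ℕ => (t:ℝ)) this
          push_cast
          rw [pch_succ (c-a-b) d]
          rw [show c + ((i:ℝ)+1) = (c + (i:ℝ)) + 1 from by ring]
          rw [pch_succ ((c + (i:ℝ)) + 1) d]
          rw [pch_succ_left (c + (i:ℝ)) d]
          rw [pch_succ a (i+1), pch_succ b (i+1)]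
          push_cast
          linear_combination (-(pch a (i+1) * pch b (i+1) * pch (c-a-b) d *
            pch (c + (i:ℝ) + 1) d * (c-a-b+(d:ℝ)))) * hrel
    rw [Finset.sum_congr rfl key, Finset.sum_add_distrib, Finset.sum_range_sub' g (n+2)]
    have hg0 : g 0 = 0 := by simp [hg]
    have hgend : g (n+2) = 0 := by simp [hg, hK, Nat.choose_succ_self]
    rw [hg0, hgend, ← Finset.mul_sum, Finset.sum_range_succ]
    have hTend : (n.choose (n+1) : ℝ) * pch a (n+1) * pch b (n+1) *
        pch (c-a-b) (n-(n+1)) * pch (c+((n+1:ℕ):ℝ)) (n-(n+1)) = 0 := by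
      simp [Nat.choose_succ_self]
    rw [hTend, add_zero, ih, pch_succ (c-a) n, pch_succ (c-b) n]
    ring

lemma beta_eval {u v : ℝ} (hu : 0 < u) (hv : 0 < v) :
    ∫ y in (0:ℝ)..1, y ^ (u - 1) * (1 - y) ^ (v - 1)
      = Real.Gamma u * Real.Gamma v / Real.Gamma (u + v) := by
  set J : ℝ := ∫ y in (0:ℝ)..1, y ^ (u - 1) * (1 - y) ^ (v - 1) with hJ
  have h := Complex.Gamma_mul_Gamma_eq_betaIntegral
      (s := (u:ℂ)) (t := (v:ℂ)) (by simpa using hu) (by simpa using hv)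
  have hB : Complex.betaIntegral u v = (J : ℂ) := by
    rw [hJ, Complex.betaIntegral, ← intervalIntegral.integral_ofReal]
    refine intervalIntegral.integral_congr fun x hx => ?_
    rw [Set.uIcc_of_le (by norm_num : (0:ℝ) ≤ 1)] at hx
    obtain ⟨hx0, hx1⟩ := hx
    rw [show ((u:ℂ)-1) = ((u-1:ℝ):ℂ) by push_cast; ring,
        show ((v:ℂ)-1) = ((v-1:ℝ):ℂ) by push_cast; ring,
        show ((1:ℂ) - (x:ℝ)) = ((1-x:ℝ):ℂ) by push_cast; ring,
        ← Complex.ofReal_cpow hx0, ← Complex.ofReal_cpow (by linarith : (0:ℝ) ≤ 1 - x)]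
    push_cast
    ring
  rw [hB] at h
  have huv : ((u:ℂ) + v) = (((u+v : ℝ)):ℂ) := by push_cast; ring
  rw [huv, Complex.Gamma_ofReal, Complex.Gamma_ofReal, Complex.Gamma_ofReal] at h
  have h3 : Real.Gamma u * Real.Gamma v = Real.Gamma (u+v) * J := by exact_mod_cast h
  have hG : Real.Gamma (u+v) ≠ 0 := (Real.Gamma_pos_of_pos (by linarith)).ne'
  rw [eq_div_iff hG, mul_comm J, ← h3]

theorem stmt_18 (N : ℕ) (hN : 1 ≤ N) (α β k : ℝ)
    (hα : -1 < α) (hβ : -1 < β) (hk : 0 < k) (hk' : k < β + 1)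
    (ω : Fin N → ℝ)
    (hω : ∀ m : Fin N, ω m =
      (Polynomial.eval (β - k + 1) (ascPochhammer ℝ (m : ℕ)) / (Nat.factorial (m : ℕ)))
        * (Polynomial.eval k (ascPochhammer ℝ (N - 1 - (m : ℕ)))
            / (Nat.factorial (N - 1 - (m : ℕ))))) :
    ∑ m : Fin N, ω m * ∫ y in (0:ℝ)..1, y ^ (α + (N : ℝ) - 1 - (m : ℕ)) * (1 - y) ^ β
      = Polynomial.eval (α + β - k + 2) (ascPochhammer ℝ (N - 1))
          * Real.Gamma (α + 1) * Real.Gamma (β + N)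
          / ((Nat.factorial (N - 1)) * Real.Gamma (α + β + N + 1)) := by
  obtain ⟨n, rfl⟩ : ∃ n, N = n + 1 := ⟨N - 1, by omega⟩
  have hα1 : (0:ℝ) < α + 1 := by linarith
  have hβ1 : (0:ℝ) < β + 1 := by linarith
  have hc : (0:ℝ) < α + β + 2 := by linarith
  set C0 : ℝ := Real.Gamma (α+1) * Real.Gamma (β+1) /
      (Real.Gamma (α+β+2) * (Nat.factorial n : ℝ) * pch (α+β+2) n) with hC0
  set G : ℕ → ℝ := fun j => ((n.choose j : ℝ) * pch k j * pch (α+1) j *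
      pch ((α+β+2) - k - (α+1)) (n - j) * pch ((α+β+2) + j) (n - j)) with hG
  set F : ℕ → ℝ := fun m =>
      (Polynomial.eval (β - k + 1) (ascPochhammer ℝ m) / (Nat.factorial m))
        * (Polynomial.eval k (ascPochhammer ℝ (n + 1 - 1 - m)) / (Nat.factorial (n + 1 - 1 - m)))
        * ∫ y in (0:ℝ)..1, y ^ (α + ((n+1 : ℕ) : ℝ) - 1 - (m : ℕ)) * (1 - y) ^ β with hF
  have h1 : ∑ m : Fin (n+1), ω m * (∫ y in (0:ℝ)..1,
        y ^ (α + ((n+1 : ℕ) : ℝ) - 1 - ((m : ℕ) : ℝ)) * (1 - y) ^ β)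
      = ∑ m ∈ range (n+1), F m := by
    rw [← Fin.sum_univ_eq_sum_range F (n+1)]
    exact Finset.sum_congr rfl fun m _ => by rw [hω m]
  rw [h1]
  have hterm : ∀ m ∈ range (n+1), F m = C0 * G (n - m) := by
    intro m hm
    rw [mem_range] at hm
    have hmn : m ≤ n := by omega
    set j : ℕ := n - m with hj
    have hjm : j + m = n := by omega
    have hnj : n - j = m := by omega
    -- integral evaluation
    have hu : (0:ℝ) < α + (j:ℝ) + 1 := by
      have : (0:ℝ) ≤ (j:ℝ) := Nat.cast_nonneg j
      linarith
    have hint := beta_eval (u := α + (j:ℝ) + 1) (v := β + 1) hu hβ1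
    rw [show ((β+1)-1 : ℝ) = β from by ring] at hint
    rw [show (α + (j:ℝ) + 1 - 1 : ℝ) = α + ((n+1 : ℕ) : ℝ) - 1 - (m : ℝ) from by
      push_cast [hj, Nat.cast_sub hmn]; ring] at hint
    rw [hF]
    simp only [Nat.add_sub_cancel]
    rw [← hj, hint]
    -- Gamma shifts
    rw [show (α + (j:ℝ) + 1 : ℝ) = (α+1) + (j:ℝ) from by ring,
        show ((α+1) + (j:ℝ) + (β+1) : ℝ) = (α+β+2) + (j:ℝ) from by ring,
        Gamma_shift (α+1) hα1 j, Gamma_shift (α+β+2) hc j]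
    rw [hG]
    simp only [hnj]
    -- factorial and pochhammer splitting
    have hfac : (Nat.factorial n : ℝ) = (n.choose j : ℝ) * (Nat.factorial j : ℝ) * (Nat.factorial m : ℝ) := by
      rw [← Nat.choose_mul_factorial_mul_factorial (show j ≤ n by omega), hnj]
      push_cast; ring
    have hpch : pch (α+β+2) n = pch (α+β+2) j * pch ((α+β+2) + (j:ℝ)) m := by
      rw [← hjm, pch_add]
    rw [hC0, hfac, hpch]
    have hΓ : Real.Gamma (α+β+2) ≠ 0 := (Real.Gamma_pos_of_pos hc).ne'
    have hp1 : pch (α+β+2) j ≠ 0 := (pch_pos hc j).ne'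
    have hp2 : pch ((α+β+2) + (j:ℝ)) m ≠ 0 :=
      (pch_pos (by have : (0:ℝ) ≤ (j:ℝ) := Nat.cast_nonneg j; linarith) m).ne'
    have hch : ((n.choose j : ℕ) : ℝ) ≠ 0 := by
      exact_mod_cast (Nat.choose_pos (show j ≤ n by omega)).ne'
    have hf1 : (Nat.factorial j : ℝ) ≠ 0 := by positivity
    have hf2 : (Nat.factorial m : ℝ) ≠ 0 := by positivity
    have harg : (α+β+2) - k - (α+1) = β - k + 1 := by ring
    rw [harg]
    have hpm : Polynomial.eval (β - k + 1) (ascPochhammer ℝ m) = pch (β - k + 1) m := rfl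
    have hpk : Polynomial.eval k (ascPochhammer ℝ j) = pch k j := rfl
    rw [hpm, hpk]
    field_simp
  rw [Finset.sum_congr rfl hterm, ← Finset.mul_sum]
  have hrefl := Finset.sum_range_reflect G (n+1)
  simp only [Nat.add_sub_cancel] at hrefl
  rw [hrefl, hG]
  rw [PS n k (α+1) (α+β+2)]
  -- right-hand side
  simp only [Nat.add_sub_cancel]
  rw [show (β + ((n+1 : ℕ) : ℝ) : ℝ) = (β+1) + (n:ℝ) from by push_cast; ring,
      show (α + β + ((n+1 : ℕ) : ℝ) + 1 : ℝ) = (α+β+2) + (n:ℝ) from by push_cast; ring,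
      Gamma_shift (β+1) hβ1 n, Gamma_shift (α+β+2) hc n]
  rw [show ((α+β+2) - k : ℝ) = α + β - k + 2 from by ring,
      show ((α+β+2) - (α+1) : ℝ) = β + 1 from by ring]
  have hpe : Polynomial.eval (α + β - k + 2) (ascPochhammer ℝ n) = pch (α + β - k + 2) n := rfl
  rw [hpe, hC0]
  have hΓ : Real.Gamma (α+β+2) ≠ 0 := (Real.Gamma_pos_of_pos hc).ne'
  have hp1 : pch (α+β+2) n ≠ 0 := (pch_pos hc n).ne'
  have hf1 : (Nat.factorial n : ℝ) ≠ 0 := by positivity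
  field_simp
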